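/- arXiv:1911.02885 — 2 statements merged into one kernel-verified Lean document; each statement's English description precedes it below -/
import Mathlib

section
/- If Y : ℝ → Matrix (Fin n) (Fin n) ℂ satisfies the matrix ODE Y' = A x * Y for all x, then (det ∘ Y)' x = trace (A x) * det (Y x) for all x (Abel's identity, differential form). -/
attribute [local instance] Matrix.normedAddCommGroup Matrix.normedSpace

/-- The determinant as a continuous multilinear map in the rows. -/
noncomputable def detCM (n : ℕ) :
    ContinuousMultilinearMap ℂ (fun _ : Fin n => (Fin n → ℂ)) ℂ :=
  { (Matrix.detRowAlternating : (Fin n → ℂ) [⋀^Fin n]→ₗ[ℂ] ℂ).toMultilinearMap with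
    cont := by
      have : Continuous fun M : Matrix (Fin n) (Fin n) ℂ => M.det :=
        Continuous.matrix_det continuous_id
      exact this }

lemma sum_det_updateRow (n : ℕ) (B M : Matrix (Fin n) (Fin n) ℂ) :
    ∑ i, (M.updateRow i ((B * M) i)).det = B.trace * M.det := by
  have h : ∀ i, (B * M) i = ∑ k, B i k • M k := by
    intro i; ext j; simp [Matrix.mul_apply, Finset.sum_apply]
  calc ∑ i, (M.updateRow i ((B * M) i)).det
      = ∑ i, B i i • M.det := by
        refine Finset.sum_congr rfl fun i _ => ?_
        rw [h i, Matrix.det_updateRow_sum]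
    _ = B.trace * M.det := by
        rw [← Finset.sum_smul]; rfl

set_option maxHeartbeats 1000000 in
theorem abel_identity_diff (n : ℕ) (A Y : ℝ → Matrix (Fin n) (Fin n) ℂ)
    (hA : Continuous A)
    (hY : ∀ x : ℝ, HasDerivAt Y (A x * Y x) x) :
    ∀ x : ℝ, HasDerivAt (fun x => (Y x).det) ((A x).trace * (Y x).det) x := by
  intro x
  have hY' : @HasDerivAt ℝ _ (∀ _ : Fin n, Fin n → ℂ) _ _ _ _ Y (A x * Y x) x := hY x
  have h1 : HasFDerivAt (detCM n) ((detCM n).linearDeriv (Y x)) (Y x) :=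
    (detCM n).hasFDerivAt (Y x)
  have hd := (h1.restrictScalars ℝ).comp_hasDerivAt x hY'
  have heq : (detCM n).linearDeriv (Y x) (A x * Y x) = (A x).trace * (Y x).det := by
    erw [ContinuousMultilinearMap.linearDeriv_apply, ← sum_det_updateRow n (A x) (Y x)]
    rfl
  simp only [ContinuousLinearMap.coe_restrictScalars'] at hd
  rw [heq] at hd
  exact hd
end

section
/- Let J : ℝ → Matrix (Fin n) (Fin n) ℂ be differentiable with J' x = i·c·λ·(σ * J x - J x * σ) + Q x * J x, where λ ∈ ℝ, σᴴ = σ, and (Q x)ᴴ = -(Q x) for all x. If (J x₀)ᴴ * J x₀ = 1 for some x₀, then (J x)ᴴ * J x = 1 for all x (J is unitary for every x). -/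
attribute [local instance] Matrix.normedAddCommGroup Matrix.normedSpace

open Complex Matrix

noncomputable def mulCLM (n : ℕ) : Matrix (Fin n) (Fin n) ℂ →L[ℝ] Matrix (Fin n) (Fin n) ℂ →L[ℝ] Matrix (Fin n) (Fin n) ℂ :=
  LinearMap.toContinuousLinearMap
  { toFun := fun A => LinearMap.toContinuousLinearMap (LinearMap.mulLeft ℝ A)
    map_add' := by intro A B; ext M; simp [add_mul]
    map_smul' := by intro c A; ext M; simp [smul_mul_assoc] }

@[simp] lemma mulCLM_apply {n : ℕ} (A B : Matrix (Fin n) (Fin n) ℂ) : mulCLM n A B = A * B := rfl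

set_option maxHeartbeats 1000000 in
lemma deriv_conj_mul {n : ℕ} (J : ℝ → Matrix (Fin n) (Fin n) ℂ) (J' : Matrix (Fin n) (Fin n) ℂ) (x : ℝ)
    (h : HasDerivAt J J' x) :
    HasDerivAt (fun y => (J y)ᴴ * J y) (J'ᴴ * J x + (J x)ᴴ * J') x := by
  have hs : HasDerivAt (fun y => (J y)ᴴ) J'ᴴ x := by
    exact h.star
  letI : NormedRing (Matrix (Fin n) (Fin n) ℂ) := Matrix.linftyOpNormedRing
  letI : NormedAlgebra ℝ (Matrix (Fin n) (Fin n) ℂ) := Matrix.linftyOpNormedAlgebra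
  exact HasDerivAt.mul hs h

noncomputable def commCLM (n : ℕ) (z : ℂ) (σ : Matrix (Fin n) (Fin n) ℂ) :
    Matrix (Fin n) (Fin n) ℂ →L[ℝ] Matrix (Fin n) (Fin n) ℂ :=
  LinearMap.toContinuousLinearMap
  { toFun := fun A => z • (σ * A - A * σ)
    map_add' := by intro A B; simp [mul_add, add_mul]; module
    map_smul' := by intro c A; simp [Matrix.mul_smul, Matrix.smul_mul, smul_sub, smul_comm c z] }

@[simp] lemma commCLM_apply {n : ℕ} (z : ℂ) (σ A : Matrix (Fin n) (Fin n) ℂ) :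
    commCLM n z σ A = z • (σ * A - A * σ) := rfl

set_option maxHeartbeats 1000000 in
theorem jost_unitary (n : ℕ) (c lam : ℝ)
    (σ : Matrix (Fin n) (Fin n) ℂ) (hσ : σᴴ = σ)
    (Q J : ℝ → Matrix (Fin n) (Fin n) ℂ)
    (hQcont : Continuous Q)
    (hQ : ∀ x : ℝ, (Q x)ᴴ = -(Q x))
    (hJ : ∀ x : ℝ, HasDerivAt J
      ((Complex.I * c * lam) • (σ * J x - J x * σ) + Q x * J x) x)
    (x₀ : ℝ) (h₀ : (J x₀)ᴴ * J x₀ = 1) :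
    ∀ x : ℝ, (J x)ᴴ * J x = 1 := by
  set z : ℂ := Complex.I * c * lam with hz
  set F : ℝ → Matrix (Fin n) (Fin n) ℂ := fun x => (J x)ᴴ * J x with hF
  set L := commCLM n z σ with hL
  -- F satisfies F' = L (F)
  have hF' : ∀ x : ℝ, HasDerivAt F (L (F x)) x := by
    intro x
    have h := deriv_conj_mul J _ x (hJ x)
    convert h using 1
    have hzc : star z = -z := by
      simp [hz, ← ofReal_mul]
    have hT : (z • (σ * J x - J x * σ) + Q x * J x)ᴴ
        = (-z) • ((J x)ᴴ * σ - σ * (J x)ᴴ) - (J x)ᴴ * Q x := by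
      simp only [conjTranspose_add, conjTranspose_smul, conjTranspose_sub, conjTranspose_mul,
        hσ, hQ, hzc, neg_smul, smul_sub, Matrix.mul_neg]
      module
    rw [hT]
    show commCLM n z σ ((J x)ᴴ * J x) = _
    simp only [commCLM_apply, sub_mul, add_mul, mul_add, mul_sub, neg_smul, smul_sub,
      Matrix.smul_mul, Matrix.mul_smul, neg_mul, mul_neg, smul_mul_assoc, mul_smul_comm,
      mul_assoc]
    module
  -- the constant 1 also satisfies the ODE
  have hL1 : L (1 : Matrix (Fin n) (Fin n) ℂ) = 0 := by
    show commCLM n z σ 1 = 0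
    simp
  intro x
  obtain ⟨K, hK⟩ : ∃ K, LipschitzWith K (fun y => L y) := ⟨_, L.lipschitz⟩
  have hv : ∀ t : ℝ, LipschitzOnWith K (fun y => L y) (Set.univ) :=
    fun _ => hK.lipschitzOnWith
  set a : ℝ := min x x₀ - 1 with ha
  set b : ℝ := max x x₀ + 1 with hb
  have hxa : a < x := by rw [ha]; linarith [min_le_left x x₀]
  have hxb : x < b := by rw [hb]; linarith [le_max_left x x₀]
  have hx₀a : a < x₀ := by rw [ha]; linarith [min_le_right x x₀]
  have hx₀b : x₀ < b := by rw [hb]; linarith [le_max_right x x₀]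
  have key := ODE_solution_unique_of_mem_Ioo (v := fun _ y => L y) (s := fun _ => Set.univ)
    (K := K) (f := F) (g := fun _ => (1 : Matrix (Fin n) (Fin n) ℂ))
    (t₀ := x₀) (a := a) (b := b) (fun t _ => hv t) ⟨hx₀a, hx₀b⟩
    (fun t _ => ⟨hF' t, Set.mem_univ _⟩)
    (fun t _ => ⟨by simpa [hL1] using hasDerivAt_const t (1 : Matrix (Fin n) (Fin n) ℂ),
      Set.mem_univ _⟩)
    (by simpa [hF] using h₀)
  have := key ⟨hxa, hxb⟩
  simpa [hF] using this
end
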